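/- Fix d ≥ 2 and γ > 0. If K is a star body in ℝ^d with γ·B^d ⊆ ker(K) and vol_d(K) = 1, then K ⊆ R_γ·B^d, where R_γ := (d+1) / (γ^{d−1}·κ_{d−1}) and κ_{d−1} is the (d−1)-dimensional Lebesgue volume of the closed unit ball of ℝ^{d−1}. -/

import Mathlib

open MeasureTheory Metric Set Filter Pointwise

noncomputable section

abbrev Euc (d : ℕ) : Type := EuclideanSpace ℝ (Fin d)

/-- Radial function of a set: `ρ_K(x) = sup {t > 0 : t • x ∈ K}`. -/
def radialFn {d : ℕ} (K : Set (Euc d)) (x : Euc d) : ℝ :=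
  sSup {t : ℝ | 0 < t ∧ t • x ∈ K}

/-- A star body: compact, `0` in the interior, star-shaped about `0`, with radial function
positive and continuous on the unit sphere. -/
def IsStarBody {d : ℕ} (K : Set (Euc d)) : Prop :=
  IsCompact K ∧ (0 : Euc d) ∈ interior K ∧
    (∀ x ∈ K, segment ℝ 0 x ⊆ K) ∧
    (∀ u ∈ sphere (0 : Euc d) 1, 0 < radialFn K u) ∧
    ContinuousOn (radialFn K) (sphere (0 : Euc d) 1)

/-- The kernel of a star body. -/
def starKernel {d : ℕ} (K : Set (Euc d)) : Set (Euc d) :=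
  {x | x ∈ K ∧ ∀ y ∈ K, segment ℝ x y ⊆ K}

/-- Radial metric between star bodies. -/
def radialDist {d : ℕ} (K L : Set (Euc d)) : ℝ :=
  ⨆ u : sphere (0 : Euc d) 1, |radialFn K (u : Euc d) - radialFn L (u : Euc d)|

/-- The adversarial objective `F(K; μ, ν) = E_μ[‖x‖_K] - E_ν[‖x‖_K]`. -/
def Fobj {d : ℕ} (K : Set (Euc d)) (μ ν : Measure (Euc d)) : ℝ :=
  (∫ x, gauge K x ∂μ) - (∫ x, gauge K x ∂ν)


lemma euc_sum_sq_vol (n : ℕ) {r : ℝ} (hr : 0 ≤ r) :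
    (volume : Measure (Fin n → ℝ)) {w | ∑ j, (w j)^2 ≤ r^2}
      = ENNReal.ofReal (r^n) * volume (closedBall (0 : Euc n) 1) := by
  have hmp := EuclideanSpace.volume_preserving_symm_measurableEquiv_toLp (Fin n)
  rw [← hmp.measure_preimage_equiv]
  have hset : (MeasurableEquiv.toLp 2 (Fin n → ℝ)).symm ⁻¹' {w : Fin n → ℝ | ∑ j, (w j)^2 ≤ r^2}
      = closedBall (0 : Euc n) r := by
    ext v
    simp only [mem_preimage, mem_setOf_eq, mem_closedBall, dist_zero_right]
    have hv : ∀ j, ((WithLp.equiv 2 (Fin n → ℝ)) v) j = v j := fun j => rfl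
    change ∑ j, v j ^ 2 ≤ r ^ 2 ↔ ‖v‖ ≤ r
    rw [EuclideanSpace.norm_eq]
    simp_rw [Real.norm_eq_abs, sq_abs]
    constructor
    · intro h
      calc Real.sqrt (∑ i, v i ^ 2) ≤ Real.sqrt (r^2) := Real.sqrt_le_sqrt h
        _ = r := Real.sqrt_sq hr
    · intro h
      calc ∑ i, v i ^ 2 = Real.sqrt (∑ i, v i ^2) ^ 2 :=
            (Real.sq_sqrt (by positivity)).symm
        _ ≤ r ^ 2 := pow_le_pow_left₀ (Real.sqrt_nonneg _) h 2
  rw [hset, Measure.addHaar_closedBall' _ _ hr, finrank_euclideanSpace_fin]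

lemma cone_volume (n : ℕ) {γ h : ℝ} (hγ : 0 < γ) (hh : 0 < h) :
    volume {y : Euc (n+1) | y (Fin.last n) ∈ Icc 0 h ∧
      ∑ j : Fin n, (y (Fin.castSucc j))^2 ≤ (γ * (1 - y (Fin.last n)/h))^2}
    = ENNReal.ofReal (γ^n * (h/(n+1))) * volume (closedBall (0 : Euc n) 1) := by
  have hmp := EuclideanSpace.volume_preserving_symm_measurableEquiv_toLp (Fin (n+1))
  set s : Set (ℝ × (Fin n → ℝ)) :=
    {p | p.1 ∈ Icc 0 h ∧ ∑ j, (p.2 j)^2 ≤ (γ * (1 - p.1/h))^2} with hs_def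
  have hs : MeasurableSet s := by
    apply MeasurableSet.inter
    · exact measurable_fst measurableSet_Icc
    · have m1 : Measurable fun p : ℝ × (Fin n → ℝ) => ∑ j, (p.2 j)^2 :=
        Finset.measurable_sum _ fun j _ =>
          ((measurable_pi_apply j).comp measurable_snd).pow_const 2
      have m2 : Measurable fun p : ℝ × (Fin n → ℝ) => (γ * (1 - p.1/h))^2 := by fun_prop
      exact measurableSet_le m1 m2
  have h1 : {y : Euc (n+1) | y (Fin.last n) ∈ Icc 0 h ∧
      ∑ j : Fin n, (y (Fin.castSucc j))^2 ≤ (γ * (1 - y (Fin.last n)/h))^2}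
      = (MeasurableEquiv.toLp 2 (Fin (n+1) → ℝ)).symm ⁻¹'
        ((MeasurableEquiv.piFinSuccAbove (fun _ : Fin (n+1) => ℝ) (Fin.last n)) ⁻¹' s) := by
    ext y
    simp only [mem_preimage, MeasurableEquiv.piFinSuccAbove_apply, mem_setOf_eq, hs_def,
      Fin.succAbove_last, Fin.insertNthEquiv,
      Equiv.coe_fn_symm_mk, Fin.removeNth]
    rfl
  rw [h1, hmp.measure_preimage_equiv,
    (volume_preserving_piFinSuccAbove (fun _ : Fin (n+1) => ℝ) (Fin.last n)).measure_preimage_equiv,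
    Measure.volume_eq_prod, Measure.prod_apply hs]
  have hslice : ∀ t : ℝ, volume (Prod.mk t ⁻¹' s)
      = Set.indicator (Icc 0 h) (fun t => ENNReal.ofReal ((γ * (1 - t/h))^n)) t
        * volume (closedBall (0 : Euc n) 1) := by
    intro t
    by_cases ht : t ∈ Icc 0 h
    · have ht1 : t / h ≤ 1 := (div_le_one hh).2 ht.2
      have hr : 0 ≤ γ * (1 - t/h) := mul_nonneg hγ.le (by linarith)
      have hpre : Prod.mk t ⁻¹' s = {w : Fin n → ℝ | ∑ j, (w j)^2 ≤ (γ * (1 - t/h))^2} := by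
        ext w
        simp only [hs_def, mem_preimage, mem_setOf_eq]
        exact and_iff_right ht
      rw [hpre, euc_sum_sq_vol n hr, Set.indicator_of_mem ht]
    · have hpre : Prod.mk t ⁻¹' s = (∅ : Set (Fin n → ℝ)) := by
        apply eq_empty_iff_forall_notMem.2
        intro w hw
        exact ht hw.1
      rw [hpre, Set.indicator_of_notMem ht]; simp
  simp_rw [hslice]
  rw [lintegral_mul_const _ (Measurable.indicator (by fun_prop) measurableSet_Icc),
    lintegral_indicator measurableSet_Icc]
  congr 1
  have hnn : ∀ t ∈ Icc (0:ℝ) h, 0 ≤ (γ * (1 - t/h))^n := by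
    intro t ht
    have ht1 : t / h ≤ 1 := (div_le_one hh).2 ht.2
    exact pow_nonneg (mul_nonneg hγ.le (by linarith)) n
  have hcont : Continuous fun t : ℝ => (γ * (1 - t/h))^n := by fun_prop
  have hint : IntegrableOn (fun t : ℝ => (γ * (1 - t/h))^n) (Icc 0 h) :=
    hcont.integrableOn_Icc
  rw [← MeasureTheory.ofReal_integral_eq_lintegral_ofReal hint
    ((ae_restrict_iff' measurableSet_Icc).2 (Filter.Eventually.of_forall hnn))]
  congr 1
  rw [integral_Icc_eq_integral_Ioc, ← intervalIntegral.integral_of_le hh.le]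
  have e1 : ∫ t in (0:ℝ)..h, (γ * (1 - t/h))^n = γ^n * ∫ t in (0:ℝ)..h, (1 - t/h)^n := by
    simp_rw [mul_pow]
    exact intervalIntegral.integral_const_mul _ _
  have e2 := intervalIntegral.integral_comp_div (a := (0:ℝ)) (b := h) (c := h)
    (f := fun u => (1-u)^n) hh.ne'
  have e3 := intervalIntegral.integral_comp_sub_left (a := (0:ℝ)) (b := 1)
    (fun u : ℝ => u^n) 1
  rw [e1]
  simp only [zero_div, div_self hh.ne'] at e2
  have e4 : ∫ x in (1-1:ℝ)..(1-0:ℝ), x ^ n = 1/(n+1) := by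
    norm_num [integral_pow]
  rw [e2, e3, e4, smul_eq_mul]
  ring

/-- Uniform boundedness of `S^d(γ,1)`: every unit-volume star body whose
kernel contains `γ·B^d` is contained in the ball of radius
`R_γ = (d+1)/(γ^{d-1} κ_{d-1})`. -/
theorem Sg1_uniformly_bounded {d : ℕ} (hd : 2 ≤ d) (γ : ℝ) (hγ : 0 < γ)
    (K : Set (Euc d)) (hK : IsStarBody K)
    (hker : closedBall (0 : Euc d) γ ⊆ starKernel K)
    (hvol : volume K = 1) :
    K ⊆ closedBall (0 : Euc d)
      ((d + 1) / (γ ^ (d - 1) * (volume (closedBall (0 : Euc (d - 1)) 1)).toReal)) := by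
  obtain ⟨n, rfl⟩ : ∃ n, d = n + 1 := ⟨d - 1, by omega⟩
  intro x hx
  rw [mem_closedBall_zero_iff]
  show ‖x‖ ≤ ((n+1 : ℕ) + 1 : ℝ) / (γ ^ n * (volume (closedBall (0 : Euc n) 1)).toReal)
  set κR := (volume (closedBall (0 : Euc n) 1)).toReal with hκR_def
  have hκpos : 0 < κR := ENNReal.toReal_pos
    (ne_of_gt (lt_of_lt_of_le (measure_ball_pos _ _ one_pos)
      (measure_mono ball_subset_closedBall)))
    measure_closedBall_lt_top.ne
  have hRpos : 0 < ((n+1 : ℕ) + 1 : ℝ) / (γ ^ n * κR) := by positivity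
  rcases eq_or_lt_of_le (norm_nonneg x) with h0 | hh
  · rw [← h0]; exact hRpos.le
  · set h := ‖x‖ with hdef
    set f : Euc (n+1) := EuclideanSpace.single (Fin.last n) (1:ℝ) with hf_def
    have hf : ‖f‖ = 1 := by rw [hf_def, EuclideanSpace.norm_single, norm_one]
    have hnorm : ‖x‖ = ‖h • f‖ := by
      rw [norm_smul, hf, Real.norm_eq_abs, abs_of_pos hh, mul_one]
    set Φ := Submodule.reflection (ℝ ∙ (x - h • f))ᗮ with hΦ_def
    have hΦx : Φ x = h • f := Submodule.reflection_sub hnorm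
    have hΦf : Φ (h • f) = x := by rw [← hΦx]; exact Submodule.reflection_reflection _ _
    set C := {y : Euc (n+1) | y (Fin.last n) ∈ Icc 0 h ∧
        ∑ j : Fin n, (y (Fin.castSucc j))^2 ≤ (γ * (1 - y (Fin.last n)/h))^2} with hC_def
    have hsub : C ⊆ ⇑Φ ⁻¹' K := by
      rintro y ⟨⟨hy0, hyh⟩, hysum⟩
      set t := y (Fin.last n) / h with ht_def
      have ht0 : 0 ≤ t := div_nonneg hy0 hh.le
      have ht1 : t ≤ 1 := (div_le_one hh).2 hyh
      set w : Euc (n+1) := y - y (Fin.last n) • f with hw_def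
      have hwnorm : ‖w‖ ≤ γ * (1 - t) := by
        have happ : ∀ i, w i = y i - y (Fin.last n) * f i := fun i => rfl
        have hwn : ‖w‖ = Real.sqrt (∑ i : Fin (n+1), ‖w i‖^2) := EuclideanSpace.norm_eq w
        have hsum : ∑ i : Fin (n+1), ‖w i‖^2 = ∑ j : Fin n, (y (Fin.castSucc j))^2 := by
          rw [Fin.sum_univ_castSucc]
          have hlast : w (Fin.last n) = 0 := by
            rw [happ, hf_def, EuclideanSpace.single_apply, if_pos rfl]; ring
          have hcs : ∀ j : Fin n, w (Fin.castSucc j) = y (Fin.castSucc j) := by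
            intro j
            rw [happ, hf_def, EuclideanSpace.single_apply,
              if_neg (Fin.castSucc_lt_last j).ne]
            ring
          rw [hlast]
          simp only [hcs, Real.norm_eq_abs, sq_abs, norm_zero]
          ring
        have hγt : 0 ≤ γ * (1 - t) := mul_nonneg hγ.le (by linarith)
        rw [hwn, hsum]
        calc Real.sqrt (∑ j : Fin n, (y (Fin.castSucc j))^2)
            ≤ Real.sqrt ((γ * (1 - t))^2) := Real.sqrt_le_sqrt hysum
          _ = γ * (1 - t) := Real.sqrt_sq hγt
      have hy : y = w + y (Fin.last n) • f := by rw [hw_def]; abel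
      have hΦy : Φ y = Φ w + t • x := by
        have hyf : y (Fin.last n) • f = t • (h • f) := by
          rw [smul_smul, ht_def, div_mul_cancel₀ _ hh.ne']
        rw [hy, hyf, map_add, LinearIsometryEquiv.map_smul, hΦf]
      rcases eq_or_lt_of_le ht1 with ht1' | ht1'
      · have hw0 : w = 0 := by
          have : ‖w‖ ≤ 0 := by rw [ht1'] at hwnorm; simpa using hwnorm
          exact norm_le_zero_iff.1 this
        rw [mem_preimage, hΦy, hw0, map_zero, zero_add, ht1', one_smul]
        exact hx
      · have h1t : 0 < 1 - t := by linarith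
        set b := (1 - t)⁻¹ • Φ w with hb_def
        have hbK : b ∈ starKernel K := by
          apply hker
          rw [mem_closedBall_zero_iff, hb_def, norm_smul, Φ.norm_map,
            Real.norm_eq_abs, abs_of_pos (inv_pos.2 h1t)]
          rw [inv_mul_le_iff₀ h1t]
          calc ‖w‖ ≤ γ * (1 - t) := hwnorm
            _ = (1 - t) * γ := by ring
        have hmem : Φ y ∈ segment ℝ b x := by
          refine ⟨1 - t, t, h1t.le, ht0, by ring, ?_⟩
          rw [hΦy, hb_def, smul_inv_smul₀ h1t.ne']
        exact hbK.2 x hx hmem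
    have hConeK : volume C ≤ 1 := by
      calc volume C ≤ volume (⇑Φ ⁻¹' K) := measure_mono hsub
        _ = volume K := Φ.measurePreserving.measure_preimage
            hK.1.measurableSet.nullMeasurableSet
        _ = 1 := hvol
    rw [hC_def, cone_volume n hγ hh] at hConeK
    have hto := ENNReal.toReal_mono (by simp) hConeK
    rw [ENNReal.toReal_mul, ENNReal.toReal_ofReal (by positivity), ENNReal.toReal_one,
      ← hκR_def] at hto
    rw [le_div_iff₀ (by positivity)]
    have hn1 : (0:ℝ) < (n:ℝ) + 1 := by positivity
    have key : γ ^ n * h * κR ≤ (n:ℝ) + 1 := by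
      have h2 := mul_le_mul_of_nonneg_right hto hn1.le
      calc γ ^ n * h * κR = γ ^ n * (h / ((n:ℝ) + 1)) * κR * ((n:ℝ) + 1) := by
            field_simp
        _ ≤ 1 * ((n:ℝ) + 1) := h2
        _ = (n:ℝ) + 1 := one_mul _
    push_cast
    nlinarith [key, mul_pos (pow_pos hγ n) hκpos, hh]
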